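/- Assume additionally r ≡ 1 (mod 4). For each natural number a with 1 ≤ a ≤ (r−1)/2 define e⁺_a : F → ℂ by e⁺_a(z) = ∑_{j=0}^{r} (−1)^j·𝟙[z = u^j·a] (a viewed in F via the algebra map from ZMod r). Then Ŝ(e⁺_a) = ∑_{b=1}^{(r−1)/2} s(a·b)·e⁺_b and T̂(e⁺_a) = ζ^{−a²}·e⁺_a, where a·b and a² are computed in ZMod r. In particular the span of {e⁺_a : 1 ≤ a ≤ (r−1)/2} is invariant under Ŝ and T̂ (Lemma 3.1 together with Equation (5)). -/

import Mathlib

open Complex Finset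

/-- For `n ∈ ZMod r`, the complex number `ζ^n = exp(2πi·n̂/r)` where `n̂` is the
canonical lift of `n`. -/
noncomputable def zmodExp (r : ℕ) (n : ZMod r) : ℂ :=
  Complex.exp (2 * Real.pi * Complex.I * (n.val : ℂ) / (r : ℂ))

/-- The S-matrix of the unfolded SL(2,ℤ)-representation:
`(Ŝf)(x) = ∑_{y ∈ F} ζ^{Tr(x^r·y)}·f(y)`. -/
noncomputable def Shat (r : ℕ) {F : Type*} [Field F] [Fintype F] [Algebra (ZMod r) F]
    (f : F → ℂ) : F → ℂ :=
  fun x => ∑ y : F, zmodExp r (Algebra.trace (ZMod r) F (x ^ r * y)) * f y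

/-- The T-matrix of the unfolded SL(2,ℤ)-representation: `(T̂f)(x) = ζ^{−N(x)}·f(x)`. -/
noncomputable def That (r : ℕ) {F : Type*} [Field F] [Fintype F] [Algebra (ZMod r) F]
    (f : F → ℂ) : F → ℂ :=
  fun x => zmodExp r (-(Algebra.norm (ZMod r) x)) * f x

/-- The alternating sum `s(m) = ∑_{j=0}^{r} (−1)^j·ζ^{m·Tr(u^j)}`. -/
noncomputable def sSum (r : ℕ) {F : Type*} [Field F] [Fintype F] [Algebra (ZMod r) F]
    (u : F) (m : ZMod r) : ℂ :=
  ∑ j ∈ Finset.range (r + 1), (-1 : ℂ) ^ j * zmodExp r (m * Algebra.trace (ZMod r) F (u ^ j))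

open scoped Classical

/-- The basis vector `e⁺_a(z) = ∑_{j=0}^{r} (−1)^j·𝟙[z = u^j·a]`. -/
noncomputable def ePlus (r : ℕ) {F : Type*} [Field F] [Fintype F] [Algebra (ZMod r) F]
    (u : F) (a : ℕ) : F → ℂ :=
  fun z => ∑ j ∈ Finset.range (r + 1),
    (-1 : ℂ) ^ j * (if z = u ^ j * algebraMap (ZMod r) F (a : ZMod r) then 1 else 0)

/-! ### Auxiliary lemmas -/


lemma roots_helper {F : Type*} [Field F] [DecidableEq F] (p : Polynomial F) (hp : p ≠ 0)
    (A : Finset F) (hA : ∀ a ∈ A, p.IsRoot a) (hcard : p.natDegree ≤ A.card)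
    {z : F} (hz : p.IsRoot z) : z ∈ A := by
  by_contra h
  have hsub : insert z A ⊆ p.roots.toFinset := by
    intro y hy
    rw [Multiset.mem_toFinset, Polynomial.mem_roots hp]
    rcases Finset.mem_insert.mp hy with rfl | hy
    · exact hz
    · exact hA y hy
  have h1 := Finset.card_le_card hsub
  rw [Finset.card_insert_of_notMem h] at h1
  have h2 := Multiset.toFinset_card_le p.roots
  have h3 := Polynomial.card_roots' p
  omega

lemma zmodExp_natCast {r : ℕ} (hr : 0 < r) (k : ℕ) :
    zmodExp r ((k : ZMod r)) = Complex.exp (2 * Real.pi * Complex.I * (k : ℂ) / (r : ℂ)) := by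
  haveI : NeZero r := ⟨hr.ne'⟩
  rw [zmodExp, ZMod.val_natCast]
  have hrc : (r : ℂ) ≠ 0 := Nat.cast_ne_zero.mpr hr.ne'
  have hk : (k : ℂ) = ((k % r : ℕ) : ℂ) + (r : ℂ) * ((k / r : ℕ) : ℂ) := by
    have h := Nat.mod_add_div k r
    conv_lhs => rw [← h]
    push_cast
    ring
  rw [hk, mul_add, add_div, Complex.exp_add]
  have : 2 * (Real.pi : ℂ) * Complex.I * ((r : ℂ) * ((k / r : ℕ) : ℂ)) / (r : ℂ)
      = ((k / r : ℕ) : ℂ) * (2 * (Real.pi : ℂ) * Complex.I) := by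
    field_simp
  rw [this]
  have h5 := Complex.exp_int_mul_two_pi_mul_I ((k / r : ℕ) : ℤ)
  rw [Int.cast_natCast] at h5
  rw [h5, mul_one]

lemma zmodExp_add {r : ℕ} (hr : 0 < r) (m n : ZMod r) :
    zmodExp r (m + n) = zmodExp r m * zmodExp r n := by
  haveI : NeZero r := ⟨hr.ne'⟩
  have h1 : m + n = (((m.val + n.val : ℕ)) : ZMod r) := by
    push_cast [ZMod.natCast_val, ZMod.cast_id]
    ring
  rw [h1, zmodExp_natCast hr]
  unfold zmodExp
  rw [Nat.cast_add, mul_add, add_div, Complex.exp_add]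

lemma zmodExp_zero {r : ℕ} (hr : 0 < r) : zmodExp r 0 = 1 := by
  haveI : NeZero r := ⟨hr.ne'⟩
  rw [zmodExp, ZMod.val_zero]
  simp

lemma shift_sum {r : ℕ} {F : Type*} [Field F] [Fintype F] [Algebra (ZMod r) F]
    (hodd : Odd r) {u : F} (hu1 : u ^ (r + 1) = 1) (m : ZMod r) (t : ℕ) :
    ∑ j ∈ Finset.range (r + 1), (-1 : ℂ) ^ j *
      zmodExp r (m * Algebra.trace (ZMod r) F (u ^ (t + j))) = (-1 : ℂ) ^ t * sSum r u m := by
  set G : ℕ → ℂ := fun n => zmodExp r (m * Algebra.trace (ZMod r) F (u ^ n)) with hG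
  induction t with
  | zero => simp [sSum, hG]
  | succ t ih =>
    have hper : G (t + 1 + r) = G t := by
      have : t + 1 + r = t + (r + 1) := by omega
      rw [this]
      simp only [hG, pow_add, hu1, mul_one]
    have h2 := Finset.sum_range_succ' (fun j => (-1 : ℂ) ^ j * G (t + j)) r
    rw [ih] at h2
    have h3 : ∑ j ∈ Finset.range r, (-1 : ℂ) ^ j * G (t + 1 + j)
        = -∑ j ∈ Finset.range r, (-1 : ℂ) ^ (j + 1) * G (t + (j + 1)) := by
      rw [← Finset.sum_neg_distrib]
      apply Finset.sum_congr rfl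
      intro j _
      have hidx : t + 1 + j = t + (j + 1) := by omega
      rw [hidx, pow_succ]
      ring
    rw [Finset.sum_range_succ (fun j => (-1 : ℂ) ^ j * G (t + 1 + j)) r, h3]
    have h4 : ∑ j ∈ Finset.range r, (-1 : ℂ) ^ (j + 1) * G (t + (j + 1))
        = (-1 : ℂ) ^ t * sSum r u m - G t := by
      simp only [pow_zero, one_mul, add_zero] at h2
      linear_combination -h2
    rw [h4, hper, Odd.neg_one_pow hodd, pow_succ]
    ring

lemma traceNorm_formula {r : ℕ} {F : Type*} [Field F] [Fintype F] [Algebra (ZMod r) F]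
    (hr : r.Prime) (hcard : Fintype.card F = r ^ 2)
    {w : F} (hw : w ^ r ≠ w) :
    (∀ x : F, algebraMap (ZMod r) F (Algebra.trace (ZMod r) F x) = x + x ^ r) ∧
    (∀ x : F, algebraMap (ZMod r) F (Algebra.norm (ZMod r) x) = x * x ^ r) := by
  haveI := Fact.mk hr
  haveI : CharP F r := charP_of_injective_algebraMap (algebraMap (ZMod r) F).injective r
  have hrank : Module.finrank (ZMod r) F = 2 := by
    have h := Module.card_eq_pow_finrank (K := ZMod r) (V := F)
    rw [ZMod.card, hcard] at h
    exact (Nat.pow_right_injective hr.two_le h.symm)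
  set σ₀ : F →ₐ[ZMod r] AlgebraicClosure (ZMod r) := IsAlgClosed.lift with hσ₀
  have frc : ∀ (c : ZMod r) (x : F), ((c • x) ^ r) = c • x ^ r := by
    intro c x
    rw [smul_pow, ZMod.pow_card]
  set fr : F →ₐ[ZMod r] F := AlgHom.mk' (frobenius F r) frc with hfr
  set σ₁ : F →ₐ[ZMod r] AlgebraicClosure (ZMod r) := σ₀.comp fr with hσ₁
  have hfr_apply : ∀ x : F, fr x = x ^ r := fun x => rfl
  have hne : σ₀ ≠ σ₁ := by
    intro h
    apply hw
    have := congrArg (fun σ : F →ₐ[ZMod r] AlgebraicClosure (ZMod r) => σ w) h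
    simp only [hσ₁, AlgHom.comp_apply, hfr_apply] at this
    exact (σ₀.toRingHom.injective this).symm
  have hcard2 : Fintype.card (F →ₐ[ZMod r] AlgebraicClosure (ZMod r)) = 2 := by
    rw [AlgHom.card]; exact hrank
  have huniv : (Finset.univ : Finset (F →ₐ[ZMod r] AlgebraicClosure (ZMod r))) = {σ₀, σ₁} := by
    symm
    apply Finset.eq_univ_of_card
    rw [Finset.card_insert_of_notMem (by simp [hne]), Finset.card_singleton, hcard2]
  have inj : Function.Injective (σ₀ : F → AlgebraicClosure (ZMod r)) := σ₀.toRingHom.injective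
  constructor
  · intro x
    apply inj
    have h1 : algebraMap (ZMod r) (AlgebraicClosure (ZMod r)) (Algebra.trace (ZMod r) F x) =
        ∑ σ : F →ₐ[ZMod r] AlgebraicClosure (ZMod r), σ x :=
      trace_eq_sum_embeddings (AlgebraicClosure (ZMod r))
    rw [huniv, Finset.sum_insert (by simp [hne]), Finset.sum_singleton] at h1
    have h2 : σ₀ (algebraMap (ZMod r) F (Algebra.trace (ZMod r) F x)) =
        algebraMap (ZMod r) (AlgebraicClosure (ZMod r)) (Algebra.trace (ZMod r) F x) :=
      σ₀.commutes _
    rw [h2, h1]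
    simp [hσ₁, AlgHom.comp_apply, hfr_apply, map_add]
  · intro x
    apply inj
    have h1 : algebraMap (ZMod r) (AlgebraicClosure (ZMod r)) (Algebra.norm (ZMod r) x) =
        ∏ σ : F →ₐ[ZMod r] AlgebraicClosure (ZMod r), σ x :=
      Algebra.norm_eq_prod_embeddings (ZMod r) (AlgebraicClosure (ZMod r)) x
    rw [huniv, Finset.prod_insert (by simp [hne]), Finset.prod_singleton] at h1
    have h2 : σ₀ (algebraMap (ZMod r) F (Algebra.norm (ZMod r) x)) =
        algebraMap (ZMod r) (AlgebraicClosure (ZMod r)) (Algebra.norm (ZMod r) x) :=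
      σ₀.commutes _
    rw [h2, h1]
    simp [hσ₁, AlgHom.comp_apply, hfr_apply, map_mul]

/-- Lemma 3.1 together with Equation (5): for `r ≡ 1 (mod 4)`,
`Ŝ(e⁺_a) = ∑_b s(a·b)·e⁺_b` and `T̂(e⁺_a) = ζ^{−a²}·e⁺_a`. -/
theorem stmt2 (r : ℕ) (hr : r.Prime) (hodd : Odd r) (h3 : r % 3 = 2) (h4 : r % 4 = 1)
    (F : Type*) [Field F] [Fintype F] [Algebra (ZMod r) F]
    (hcard : Fintype.card F = r ^ 2)
    (u : F) (hu : orderOf u = r + 1)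
    (a : ℕ) (ha1 : 1 ≤ a) (ha2 : a ≤ (r - 1) / 2) :
    Shat r (ePlus r u a) =
      (fun z => ∑ b ∈ Finset.Icc 1 ((r - 1) / 2),
        sSum r u ((a : ZMod r) * (b : ZMod r)) * ePlus r u b z) ∧
    That r (ePlus r u a) = (fun z => zmodExp r (-((a : ZMod r) ^ 2)) * ePlus r u a z) := by
  haveI := Fact.mk hr
  classical
  have hr2 : 2 ≤ r := hr.two_le
  have hrodd : r % 2 = 1 := Nat.odd_iff.mp hodd
  have hr0 : 0 < r := by omega
  have inj : Function.Injective (algebraMap (ZMod r) F) := (algebraMap (ZMod r) F).injective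
  have hu1 : u ^ (r + 1) = 1 := by rw [← hu]; exact pow_orderOf_eq_one u
  have hu0 : u ≠ 0 := by
    intro h
    rw [h, zero_pow (by omega : r + 1 ≠ 0)] at hu1
    exact zero_ne_one hu1
  have hupow0 : ∀ j : ℕ, (u : F) ^ j ≠ 0 := fun j => pow_ne_zero j hu0
  have hfrob : ∀ x : F, (x ^ r) ^ r = x := by
    intro x
    rw [← pow_mul]
    have h := FiniteField.pow_card x
    rw [hcard] at h
    rwa [pow_two] at h
  have hwne : u ^ r ≠ u := by
    intro h
    have h2 : u ^ (r - 1) * u = u := by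
      rw [← pow_succ, (by omega : r - 1 + 1 = r)]
      exact h
    have h2' : u ^ (r - 1) = 1 := by
      have := mul_right_cancel₀ hu0 (h2.trans (one_mul u).symm)
      exact this
    have hdvd := orderOf_dvd_of_pow_eq_one h2'
    rw [hu] at hdvd
    have := Nat.le_of_dvd (by omega) hdvd
    omega
  obtain ⟨htr, hnm⟩ := traceNorm_formula hr hcard hwne
  have htrfrob : ∀ x : F, Algebra.trace (ZMod r) F (x ^ r) = Algebra.trace (ZMod r) F x := by
    intro x
    apply inj
    rw [htr, htr, hfrob x]
    ring
  have htrlin : ∀ (m : ZMod r) (x : F),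
      Algebra.trace (ZMod r) F (algebraMap (ZMod r) F m * x) = m * Algebra.trace (ZMod r) F x := by
    intro m x
    rw [← Algebra.smul_def, map_smul, smul_eq_mul]
  have hbase_pow : ∀ m : ZMod r, (algebraMap (ZMod r) F m) ^ r = algebraMap (ZMod r) F m := by
    intro m
    rw [← map_pow, ZMod.pow_card]
  have L1 : ∀ z : F, z ^ r = z → ∃ m : ZMod r, algebraMap (ZMod r) F m = z := by
    intro z hz
    have hp : (Polynomial.X ^ r - Polynomial.X : Polynomial F) ≠ 0 := by
      intro h0
      have hc : (Polynomial.X ^ r - Polynomial.X : Polynomial F).coeff r = 1 := by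
        rw [Polynomial.coeff_sub, Polynomial.coeff_X_pow, Polynomial.coeff_X]
        rw [if_pos rfl, if_neg (by omega)]
        ring
      rw [h0] at hc
      simp at hc
    have hmem := roots_helper (Polynomial.X ^ r - Polynomial.X) hp
      (Finset.univ.image (algebraMap (ZMod r) F))
      (by
        intro y hy
        obtain ⟨m, _, rfl⟩ := Finset.mem_image.mp hy
        simp only [Polynomial.IsRoot, Polynomial.eval_sub, Polynomial.eval_pow,
          Polynomial.eval_X]
        rw [hbase_pow, sub_self])
      (by
        rw [Finset.card_image_of_injective _ inj, Finset.card_univ, ZMod.card]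
        refine le_trans (Polynomial.natDegree_sub_le _ _) ?_
        rw [Polynomial.natDegree_X_pow, Polynomial.natDegree_X]
        omega)
      (z := z)
      (by
        simp only [Polynomial.IsRoot, Polynomial.eval_sub, Polynomial.eval_pow,
          Polynomial.eval_X]
        rw [hz, sub_self])
    obtain ⟨m, _, hm⟩ := Finset.mem_image.mp hmem
    exact ⟨m, hm⟩
  have L2 : ∀ z : F, z ^ (r + 1) = 1 → ∃ j, j < r + 1 ∧ u ^ j = z := by
    intro z hz
    have hp : (Polynomial.X ^ (r + 1) - Polynomial.C 1 : Polynomial F) ≠ 0 :=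
      Polynomial.X_pow_sub_C_ne_zero (by omega) 1
    have hmem := roots_helper (Polynomial.X ^ (r + 1) - Polynomial.C 1) hp
      ((Finset.range (r + 1)).image (u ^ ·))
      (by
        intro y hy
        obtain ⟨j, _, rfl⟩ := Finset.mem_image.mp hy
        simp only [Polynomial.IsRoot, Polynomial.eval_sub, Polynomial.eval_pow,
          Polynomial.eval_X, Polynomial.eval_C]
        rw [← pow_mul, mul_comm j (r + 1), pow_mul, hu1, one_pow, sub_self])
      (by
        rw [Finset.card_image_of_injOn, Finset.card_range, Polynomial.natDegree_X_pow_sub_C]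
        intro i hi j hj hij
        exact pow_injOn_Iio_orderOf (by rw [hu]; exact Set.mem_Iio.mpr (Finset.mem_range.mp hi))
          (by rw [hu]; exact Set.mem_Iio.mpr (Finset.mem_range.mp hj)) hij)
      (z := z)
      (by
        simp only [Polynomial.IsRoot, Polynomial.eval_sub, Polynomial.eval_pow,
          Polynomial.eval_X, Polynomial.eval_C]
        rw [hz, sub_self])
    obtain ⟨j, hj, hjz⟩ := Finset.mem_image.mp hmem
    exact ⟨j, Finset.mem_range.mp hj, hjz⟩
  have hm1 : u ^ ((r + 1) / 2) = -1 := by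
    have h2 : (u ^ ((r + 1) / 2)) ^ 2 = 1 := by
      rw [← pow_mul, (by omega : (r + 1) / 2 * 2 = r + 1), hu1]
    have hne1 : u ^ ((r + 1) / 2) ≠ 1 := by
      intro h
      have hdvd := orderOf_dvd_of_pow_eq_one h
      rw [hu] at hdvd
      have := Nat.le_of_dvd (by omega) hdvd
      omega
    have h3' : (u ^ ((r + 1) / 2) - 1) * (u ^ ((r + 1) / 2) + 1) = 0 := by
      linear_combination h2
    rcases mul_eq_zero.mp h3' with h | h
    · exact absurd (by linear_combination h) hne1
    · linear_combination h
  have hpowmod : ∀ n : ℕ, u ^ (n % (r + 1)) = u ^ n := by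
    intro n
    rw [← hu]
    exact pow_mod_orderOf u n
  have haZ : (a : ZMod r) ≠ 0 := by
    intro h
    rw [ZMod.natCast_eq_zero_iff] at h
    have := Nat.le_of_dvd (by omega) h
    omega
  have haF : algebraMap (ZMod r) F (a : ZMod r) ≠ 0 := fun h =>
    haZ (inj (by rw [h, map_zero]))
  have hbZ : ∀ b : ℕ, b ∈ Finset.Icc 1 ((r - 1) / 2) → (b : ZMod r) ≠ 0 := by
    intro b hb h
    obtain ⟨hb1, hb2⟩ := Finset.mem_Icc.mp hb
    rw [ZMod.natCast_eq_zero_iff] at h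
    have := Nat.le_of_dvd (by omega) h
    omega
  have hbF : ∀ b : ℕ, b ∈ Finset.Icc 1 ((r - 1) / 2) →
      algebraMap (ZMod r) F (b : ZMod r) ≠ 0 := fun b hb h =>
    hbZ b hb (inj (by rw [h, map_zero]))
  have haIcc : a ∈ Finset.Icc 1 ((r - 1) / 2) := Finset.mem_Icc.mpr ⟨ha1, ha2⟩
  -- uniqueness of the `b`-value of a representation
  have hrep_unique : ∀ (b b' : ℕ), b ∈ Finset.Icc 1 ((r - 1) / 2) →
      b' ∈ Finset.Icc 1 ((r - 1) / 2) → ∀ (k j : ℕ),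
      u ^ k * algebraMap (ZMod r) F (b : ZMod r) = u ^ j * algebraMap (ZMod r) F (b' : ZMod r) →
      b = b' := by
    intro b b' hb hb' k j heq
    obtain ⟨hb1, hb2⟩ := Finset.mem_Icc.mp hb
    obtain ⟨hb1', hb2'⟩ := Finset.mem_Icc.mp hb'
    have hsq : (algebraMap (ZMod r) F (b : ZMod r)) ^ 2
        = (algebraMap (ZMod r) F (b' : ZMod r)) ^ 2 := by
      have h5 := congrArg (· ^ (r + 1)) heq
      simp only [mul_pow] at h5
      rw [← pow_mul, mul_comm k (r + 1), pow_mul, hu1, one_pow, one_mul] at h5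
      rw [← pow_mul, mul_comm j (r + 1), pow_mul, hu1, one_pow, one_mul] at h5
      rw [pow_succ, hbase_pow, pow_succ, hbase_pow] at h5
      rw [pow_two, pow_two]
      exact h5
    have h6 : (algebraMap (ZMod r) F (b : ZMod r) - algebraMap (ZMod r) F (b' : ZMod r))
        * (algebraMap (ZMod r) F (b : ZMod r) + algebraMap (ZMod r) F (b' : ZMod r)) = 0 := by
      linear_combination hsq
    rcases mul_eq_zero.mp h6 with h | h
    · have h7 : (b : ZMod r) = (b' : ZMod r) := inj (by linear_combination h)
      have h8 := (ZMod.natCast_eq_natCast_iff _ _ _).mp h7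
      unfold Nat.ModEq at h8
      rw [Nat.mod_eq_of_lt (by omega), Nat.mod_eq_of_lt (by omega)] at h8
      exact h8
    · exfalso
      have h7 : ((b + b' : ℕ) : ZMod r) = 0 := by
        push_cast
        exact inj (by rw [map_add, map_zero]; linear_combination h)
      rw [ZMod.natCast_eq_zero_iff] at h7
      have := Nat.le_of_dvd (by omega) h7
      omega
  have hk_unique : ∀ (b : ℕ), (b : ZMod r) ≠ 0 → ∀ (k j : ℕ), k < r + 1 → j < r + 1 →
      u ^ k * algebraMap (ZMod r) F (b : ZMod r) = u ^ j * algebraMap (ZMod r) F (b : ZMod r) →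
      k = j := by
    intro b hb k j hk hj heq
    have hbF' : algebraMap (ZMod r) F (b : ZMod r) ≠ 0 := fun h =>
      hb (inj (by rw [h, map_zero]))
    have h5 : u ^ k = u ^ j := mul_right_cancel₀ hbF' heq
    exact pow_injOn_Iio_orderOf (by rw [hu]; exact hk) (by rw [hu]; exact hj) h5
  have hePlus_at : ∀ (b : ℕ), b ∈ Finset.Icc 1 ((r - 1) / 2) → ∀ (k : ℕ), k < r + 1 →
      ∀ (b' : ℕ), b' ∈ Finset.Icc 1 ((r - 1) / 2) →
      ePlus r u b' (u ^ k * algebraMap (ZMod r) F (b : ZMod r))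
        = if b' = b then (-1 : ℂ) ^ k else 0 := by
    intro b hb k hk b' hb'
    by_cases hbb : b' = b
    · subst hbb
      rw [if_pos rfl]
      simp only [ePlus]
      rw [Finset.sum_eq_single_of_mem k (Finset.mem_range.mpr hk)]
      · rw [if_pos rfl, mul_one]
      · intro j hj hjk
        rw [if_neg, mul_zero]
        intro heq
        exact hjk (hk_unique b' (hbZ b' hb') k j hk (Finset.mem_range.mp hj) heq).symm
    · rw [if_neg hbb]
      simp only [ePlus]
      apply Finset.sum_eq_zero
      intro j _
      rw [if_neg, mul_zero]
      intro heq
      exact hbb (hrep_unique b' b hb' hb j k heq.symm)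
  have hcollapse : ∀ x : F, Shat r (ePlus r u a) x = ∑ j ∈ Finset.range (r + 1),
      (-1 : ℂ) ^ j * zmodExp r (Algebra.trace (ZMod r) F
        (x ^ r * (u ^ j * algebraMap (ZMod r) F (a : ZMod r)))) := by
    intro x
    simp only [Shat, ePlus, Finset.mul_sum]
    rw [Finset.sum_comm]
    apply Finset.sum_congr rfl
    intro j _
    simp only [mul_ite, mul_one, mul_zero]
    rw [Finset.sum_ite_eq' Finset.univ (u ^ j * algebraMap (ZMod r) F (a : ZMod r))
      (fun y => zmodExp r (Algebra.trace (ZMod r) F (x ^ r * y)) * (-1 : ℂ) ^ j)]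
    rw [if_pos (Finset.mem_univ _)]
    ring
  constructor
  · -- the S-matrix identity
    funext x
    by_cases hP : ∃ k, k < r + 1 ∧ ∃ b, b ∈ Finset.Icc 1 ((r - 1) / 2) ∧
        x = u ^ k * algebraMap (ZMod r) F (b : ZMod r)
    · obtain ⟨k, hk, b, hb, hx⟩ := hP
      have hRHS : ∑ b' ∈ Finset.Icc 1 ((r - 1) / 2),
          sSum r u ((a : ZMod r) * (b' : ZMod r)) * ePlus r u b' x
          = sSum r u ((a : ZMod r) * (b : ZMod r)) * (-1 : ℂ) ^ k := by
        rw [Finset.sum_eq_single_of_mem b hb]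
        · rw [hx, hePlus_at b hb k hk b hb, if_pos rfl]
        · intro b' hb' hbb
          rw [hx, hePlus_at b hb k hk b' hb', if_neg hbb, mul_zero]
      rw [hRHS, hcollapse]
      have hterm : ∀ j : ℕ, x ^ r * (u ^ j * algebraMap (ZMod r) F (a : ZMod r))
          = algebraMap (ZMod r) F ((a : ZMod r) * (b : ZMod r)) * u ^ (k * r + j) := by
        intro j
        rw [hx, mul_pow, ← pow_mul, hbase_pow, map_mul, pow_add]
        ring
      calc ∑ j ∈ Finset.range (r + 1), (-1 : ℂ) ^ j * zmodExp r (Algebra.trace (ZMod r) F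
            (x ^ r * (u ^ j * algebraMap (ZMod r) F (a : ZMod r))))
          = ∑ j ∈ Finset.range (r + 1), (-1 : ℂ) ^ j * zmodExp r
              (((a : ZMod r) * (b : ZMod r)) * Algebra.trace (ZMod r) F (u ^ (k * r + j))) := by
            apply Finset.sum_congr rfl
            intro j _
            rw [hterm j, htrlin]
        _ = (-1 : ℂ) ^ (k * r) * sSum r u ((a : ZMod r) * (b : ZMod r)) :=
            shift_sum hodd hu1 _ _
        _ = sSum r u ((a : ZMod r) * (b : ZMod r)) * (-1 : ℂ) ^ k := by
            rw [mul_comm k r, pow_mul, Odd.neg_one_pow hodd]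
            ring
    · by_cases hx0 : x = 0
      · subst hx0
        have hL : Shat r (ePlus r u a) 0 = 0 := by
          rw [hcollapse]
          rw [Finset.sum_congr rfl (fun j (_ : j ∈ Finset.range (r + 1)) => by
            rw [zero_pow (by omega : r ≠ 0), zero_mul, map_zero, zmodExp_zero hr0, mul_one])]
          rw [neg_one_geom_sum, if_pos (Nat.even_iff.mpr (by omega))]
        rw [hL]
        symm
        apply Finset.sum_eq_zero
        intro b' hb'
        have h0 : ePlus r u b' 0 = 0 := by
          simp only [ePlus]
          apply Finset.sum_eq_zero
          intro j _
          rw [if_neg, mul_zero]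
          intro heq
          exact (mul_ne_zero (hupow0 j) (hbF b' hb')) heq.symm
        rw [h0, mul_zero]
      · -- x nonzero, no representation: both sides vanish
        obtain ⟨c, hc⟩ : ∃ c : F, c = x ^ r * algebraMap (ZMod r) F (a : ZMod r) := ⟨_, rfl⟩
        have hc0 : c ≠ 0 := by rw [hc]; exact mul_ne_zero (pow_ne_zero r hx0) haF
        have hcmu : (c ^ (r - 1)) ^ (r + 1) = 1 := by
          rw [← pow_mul]
          have h5 : c ^ ((r - 1) * (r + 1)) * c = c := by
            rw [← pow_succ]
            have hexp : (r - 1) * (r + 1) + 1 = r * r := by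
              obtain ⟨s, rfl⟩ : ∃ s, r = s + 1 := ⟨r - 1, by omega⟩
              simp only [Nat.add_sub_cancel]
              ring
            rw [hexp, pow_mul]
            exact hfrob c
          exact mul_right_cancel₀ hc0 (h5.trans (one_mul c).symm)
        obtain ⟨t, ht, htc⟩ := L2 _ hcmu
        have hrepP : ∀ d : ZMod r, d ≠ 0 → ∀ k : ℕ, x = u ^ k * algebraMap (ZMod r) F d →
            ∃ k', k' < r + 1 ∧ ∃ b, b ∈ Finset.Icc 1 ((r - 1) / 2) ∧
              x = u ^ k' * algebraMap (ZMod r) F (b : ZMod r) := by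
          intro d hd k hx'
          haveI : NeZero r := ⟨by omega⟩
          have hdlt : d.val < r := ZMod.val_lt d
          have hdpos : 0 < d.val := by
            rcases Nat.eq_zero_or_pos d.val with h | h
            · exact absurd ((ZMod.val_eq_zero d).mp h) hd
            · exact h
          have hdcast : ((d.val : ℕ) : ZMod r) = d := by
            rw [ZMod.natCast_val, ZMod.cast_id]
          by_cases hle : d.val ≤ (r - 1) / 2
          · exact ⟨k % (r + 1), Nat.mod_lt _ (by omega), d.val,
              Finset.mem_Icc.mpr ⟨by omega, hle⟩, by rw [hdcast, hpowmod, ← hx']⟩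
          · refine ⟨(k + (r + 1) / 2) % (r + 1), Nat.mod_lt _ (by omega), r - d.val,
              Finset.mem_Icc.mpr ⟨by omega, by omega⟩, ?_⟩
            have hcast : ((r - d.val : ℕ) : ZMod r) = -d := by
              have h6 : (((r - d.val) + d.val : ℕ) : ZMod r) = 0 := by
                rw [(by omega : (r - d.val) + d.val = r)]
                exact ZMod.natCast_self r
              push_cast at h6
              rw [hdcast] at h6
              exact eq_neg_of_add_eq_zero_left h6
            rw [hcast, map_neg, hpowmod, pow_add, hm1]
            rw [hx']
            ring
        have htodd : Odd t := by
          rcases Nat.even_or_odd t with he | ho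
          · exfalso
            obtain ⟨t', rfl⟩ := he
            have hz1 : (c * u ^ t') ^ (r - 1) = 1 := by
              rw [mul_pow, ← pow_mul, ← htc, ← pow_add]
              have hexp : t' + t' + t' * (r - 1) = t' * (r + 1) := by
                obtain ⟨s, rfl⟩ : ∃ s, r = s + 1 := ⟨r - 1, by omega⟩
                simp only [Nat.add_sub_cancel]
                ring
              rw [hexp, mul_comm t' (r + 1), pow_mul, hu1, one_pow]
            have hzr : (c * u ^ t') ^ r = c * u ^ t' := by
              rw [(by omega : r = (r - 1) + 1), pow_succ, hz1, one_mul]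
            obtain ⟨m, hm⟩ := L1 _ hzr
            have hm0 : m ≠ 0 := by
              intro h
              rw [h, map_zero] at hm
              exact (mul_ne_zero hc0 (hupow0 t')) hm.symm
            obtain ⟨d, hd⟩ : ∃ d : ZMod r, d = m * (a : ZMod r)⁻¹ := ⟨_, rfl⟩
            have hd0 : d ≠ 0 := by rw [hd]; exact mul_ne_zero hm0 (inv_ne_zero haZ)
            have hwr : (u ^ t' * algebraMap (ZMod r) F d) ^ r = x ^ r := by
              have hq : algebraMap (ZMod r) F (a : ZMod r) * u ^ t' ≠ 0 :=
                mul_ne_zero haF (hupow0 t')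
              apply mul_right_cancel₀ hq
              rw [mul_pow, ← pow_mul, hbase_pow]
              calc u ^ (t' * r) * algebraMap (ZMod r) F d *
                    (algebraMap (ZMod r) F (a : ZMod r) * u ^ t')
                  = u ^ (t' * r + t') * algebraMap (ZMod r) F (d * (a : ZMod r)) := by
                    rw [pow_add, map_mul]
                    ring
                _ = u ^ (t' * (r + 1)) * algebraMap (ZMod r) F (d * (a : ZMod r)) := by
                    rw [(by ring : t' * r + t' = t' * (r + 1))]
                _ = algebraMap (ZMod r) F m := by
                    rw [mul_comm t' (r + 1), pow_mul, hu1, one_pow, one_mul, hd,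
                      inv_mul_cancel_right₀ haZ]
                _ = c * u ^ t' := hm
                _ = x ^ r * (algebraMap (ZMod r) F (a : ZMod r) * u ^ t') := by
                    rw [hc]
                    ring
            have hx' : x = u ^ t' * algebraMap (ZMod r) F d := by
              have h7 := congrArg (· ^ r) hwr
              try simp only at h7
              rw [hfrob, hfrob] at h7
              exact h7.symm
            exact hP (hrepP d hd0 t' hx')
          · exact ho
        haveI : NeZero (r + 1) := ⟨by omega⟩
        set e : ℕ → ℕ := fun j => ((t : ZMod (r + 1)) - (j : ZMod (r + 1))).val with he
        have he_lt : ∀ j, e j < r + 1 := fun j => ZMod.val_lt _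
        have he_cast : ∀ j : ℕ, ((e j : ℕ) : ZMod (r + 1))
            = (t : ZMod (r + 1)) - (j : ZMod (r + 1)) := by
          intro j
          rw [he]
          simp only
          rw [ZMod.natCast_val, ZMod.cast_id]
        have he_invol : ∀ j, j < r + 1 → e (e j) = j := by
          intro j hj
          rw [he]
          simp only
          rw [he_cast, sub_sub_cancel, ZMod.val_natCast_of_lt hj]
        have hmod : ∀ j : ℕ, (e j + j) ≡ t [MOD r + 1] := by
          intro j
          have h7 : ((e j + j : ℕ) : ZMod (r + 1)) = ((t : ℕ) : ZMod (r + 1)) := by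
            rw [Nat.cast_add, he_cast]
            ring
          exact (ZMod.natCast_eq_natCast_iff _ _ _).mp h7
        have hu_e : ∀ j : ℕ, u ^ (e j) * u ^ j = u ^ t := by
          intro j
          rw [← pow_add]
          calc u ^ (e j + j) = u ^ ((e j + j) % (r + 1)) := (hpowmod _).symm
            _ = u ^ (t % (r + 1)) := by rw [hmod j]
            _ = u ^ t := hpowmod t
        have hpar : ∀ j : ℕ, (e j + j) % 2 = 1 := by
          intro j
          have h9 : (e j + j) % 2 = t % 2 := Nat.ModEq.of_dvd ⟨(r + 1) / 2, by omega⟩ (hmod j)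
          rw [h9]
          exact Nat.odd_iff.mp htodd
        set f : ℕ → ℂ := fun j => (-1 : ℂ) ^ j *
          zmodExp r (Algebra.trace (ZMod r) F (c * u ^ j)) with hf
        have hLHSf : Shat r (ePlus r u a) x = ∑ j ∈ Finset.range (r + 1), f j := by
          rw [hcollapse]
          apply Finset.sum_congr rfl
          intro j _
          have h7 : x ^ r * (u ^ j * algebraMap (ZMod r) F (a : ZMod r)) = c * u ^ j := by
            rw [hc]
            ring
          rw [h7]
        have hneg : ∀ j ∈ Finset.range (r + 1), f (e j) = -f j := by
          intro j _
          have hX : c * u ^ (e j) = (c * u ^ j) ^ r := by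
            apply mul_right_cancel₀ (hupow0 j)
            calc c * u ^ (e j) * u ^ j = c * (u ^ (e j) * u ^ j) := by ring
              _ = c * u ^ t := by rw [hu_e j]
              _ = c ^ r := by
                  rw [htc, mul_comm, ← pow_succ, (by omega : r - 1 + 1 = r)]
              _ = (c * u ^ j) ^ r * u ^ j := by
                  rw [mul_pow, ← pow_mul, mul_assoc, ← pow_add,
                    (by ring : j * r + j = j * (r + 1)), mul_comm j (r + 1), pow_mul,
                    hu1, one_pow, mul_one]
          have hsign : (-1 : ℂ) ^ (e j) = -(-1 : ℂ) ^ j := by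
            have hh : (-1 : ℂ) ^ (e j + j) = -1 := by
              rw [← Nat.div_add_mod (e j + j) 2, pow_add, pow_mul, hpar j]
              simp
            have hsq : (-1 : ℂ) ^ j * (-1 : ℂ) ^ j = 1 := by
              rw [← pow_add]
              exact Even.neg_one_pow ⟨j, rfl⟩
            calc (-1 : ℂ) ^ (e j)
                = (-1 : ℂ) ^ (e j) * ((-1 : ℂ) ^ j * (-1 : ℂ) ^ j) := by rw [hsq, mul_one]
              _ = ((-1 : ℂ) ^ (e j + j)) * (-1 : ℂ) ^ j := by rw [pow_add]; ring
              _ = -(-1 : ℂ) ^ j := by rw [hh]; ring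
          rw [hf]
          simp only
          rw [hX, htrfrob, hsign]
          ring
        have hswap : ∑ j ∈ Finset.range (r + 1), f j
            = ∑ j ∈ Finset.range (r + 1), f (e j) := by
          refine Finset.sum_nbij' e e ?_ ?_ ?_ ?_ ?_
          · intro j _
            exact Finset.mem_range.mpr (he_lt j)
          · intro j _
            exact Finset.mem_range.mpr (he_lt j)
          · intro j hj
            exact he_invol j (Finset.mem_range.mp hj)
          · intro j hj
            exact he_invol j (Finset.mem_range.mp hj)
          · intro j hj
            rw [he_invol j (Finset.mem_range.mp hj)]
        have hzero : ∑ j ∈ Finset.range (r + 1), f j = 0 := by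
          have h10 : ∑ j ∈ Finset.range (r + 1), f j
              = -∑ j ∈ Finset.range (r + 1), f j := by
            calc ∑ j ∈ Finset.range (r + 1), f j
                = ∑ j ∈ Finset.range (r + 1), f (e j) := hswap
              _ = ∑ j ∈ Finset.range (r + 1), -f j := Finset.sum_congr rfl hneg
              _ = -∑ j ∈ Finset.range (r + 1), f j := by rw [Finset.sum_neg_distrib]
          have h11 : (2 : ℂ) * ∑ j ∈ Finset.range (r + 1), f j = 0 := by
            linear_combination h10
          have h12 := mul_eq_zero.mp h11
          rcases h12 with h | h
          · exact absurd h two_ne_zero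
          · exact h
        rw [hLHSf, hzero]
        symm
        apply Finset.sum_eq_zero
        intro b' hb'
        have h0 : ePlus r u b' x = 0 := by
          simp only [ePlus]
          apply Finset.sum_eq_zero
          intro j hj
          rw [if_neg, mul_zero]
          intro heq
          exact hP ⟨j, Finset.mem_range.mp hj, b', hb', heq⟩
        rw [h0, mul_zero]
  · -- the T-matrix identity
    funext z
    simp only [That]
    by_cases hz : ∃ j, z = u ^ j * algebraMap (ZMod r) F (a : ZMod r)
    · obtain ⟨j, rfl⟩ := hz
      have hN : Algebra.norm (ZMod r) (u ^ j * algebraMap (ZMod r) F (a : ZMod r))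
          = (a : ZMod r) ^ 2 := by
        apply inj
        rw [hnm]
        rw [mul_pow, ← pow_mul, mul_comm j r, pow_mul]
        rw [hbase_pow]
        calc u ^ j * algebraMap (ZMod r) F (a : ZMod r)
              * ((u ^ r) ^ j * algebraMap (ZMod r) F (a : ZMod r))
            = u ^ j * (u ^ r) ^ j * (algebraMap (ZMod r) F (a : ZMod r)
              * algebraMap (ZMod r) F (a : ZMod r)) := by ring
          _ = (u ^ (r + 1)) ^ j * (algebraMap (ZMod r) F (a : ZMod r)
              * algebraMap (ZMod r) F (a : ZMod r)) := by
              rw [← mul_pow, ← pow_succ']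
          _ = algebraMap (ZMod r) F ((a : ZMod r) ^ 2) := by
              simp [hu1, map_pow, pow_two]
      rw [hN]
    · have hz0 : ePlus r u a z = 0 := by
        simp only [ePlus]
        apply Finset.sum_eq_zero
        intro j _
        rw [if_neg, mul_zero]
        intro heq
        exact hz ⟨j, heq⟩
      rw [hz0, mul_zero, mul_zero]
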